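/- arXiv:1407.8246 — 2 statements merged into one kernel-verified Lean document; each statement's English description precedes it below -/
import Mathlib

section
/- Let x, x' ∈ ℝⁿ with ‖x‖₂ ≤ 1 and ‖x'‖₂ ≤ 1, and let [x,1], [x',1] ∈ ℝ^{n+1} denote the concatenations of x and x' with the scalar 1. Then ‖x − x'‖₂ ≤ 2 ‖ [x,1]/‖[x,1]‖₂ − [x',1]/‖[x',1]‖₂ ‖₂. In particular, if the normalized augmented vectors are within δ/8 of each other in Euclidean norm, then ‖x − x'‖₂ ≤ δ/4. -/
/-- Concatenation of a vector `z ∈ ℝⁿ` with the scalar `1`, yielding `[z,1] ∈ ℝ^{n+1}`. -/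
noncomputable def aug {n : ℕ} (z : EuclideanSpace ℝ (Fin n)) : EuclideanSpace ℝ (Fin (n + 1)) :=
  WithLp.toLp 2 (fun i => if h : (i : ℕ) < n then z ⟨i, h⟩ else 1)

set_option maxHeartbeats 1000000 in
lemma key_ineq (p q t c : ℝ) (hp0 : 0 ≤ p) (hq0 : 0 ≤ q) (hp1 : p ≤ 1) (hq1 : q ≤ 1)
    (ht : t ≤ p * q) (hc2 : c ^ 2 = (p * q + 1) ^ 2 + (p - q) ^ 2) (hcp : 0 < c) :
    p ^ 2 + q ^ 2 - 2 * t ≤ 4 * (2 - 2 * ((t + 1) / c)) := by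
  have h1 : p * q + 1 ≤ 2 - (p - q) := by nlinarith [mul_nonneg hp0 hq0]
  have h2 : p * q + 1 ≤ 2 + (p - q) := by nlinarith [mul_nonneg hp0 hq0]
  have hm1 : (0:ℝ) ≤ p * q + 1 := by nlinarith [mul_nonneg hp0 hq0]
  have hm : (p * q + 1) ^ 2 ≤ 4 - (p - q) ^ 2 := by
    nlinarith [mul_le_mul h1 h2 hm1 (by linarith : (0:ℝ) ≤ 2 - (p - q))]
  have hd2le : (p - q) ^ 2 ≤ 1 := by nlinarith
  have hcle : c ≤ 2 := by nlinarith [sq_nonneg (p - q)]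
  have hbracket : (0:ℝ) ≤ (p * q + 1) ^ 2 * ((p - q) ^ 2 - 16) + (8 - (p - q) ^ 2) ^ 2 := by
    nlinarith [mul_le_mul_of_nonneg_right hm (by nlinarith : (0:ℝ) ≤ 16 - (p - q) ^ 2)]
  have hs : (8 * (p * q + 1)) ^ 2 ≤ (c * (8 - (p - q) ^ 2)) ^ 2 := by
    nlinarith [mul_nonneg (sq_nonneg (p - q)) hbracket, hc2]
  have hkey2 : 8 * (p * q + 1) ≤ c * (8 - (p - q) ^ 2) := by
    have hL : (0:ℝ) ≤ 8 * (p * q + 1) := by linarith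
    have hR : (0:ℝ) ≤ c * (8 - (p - q) ^ 2) := by nlinarith
    nlinarith [hs, hL, hR]
  have hpoly : c * (p ^ 2 + q ^ 2 - 2 * t) ≤ 8 * c - 8 * t - 8 := by
    nlinarith [mul_nonneg (by linarith : (0:ℝ) ≤ p * q - t) (by linarith : (0:ℝ) ≤ 8 - 2 * c),
      hkey2]
  rw [show (4:ℝ) * (2 - 2 * ((t + 1) / c)) = 8 - 8 * (t + 1) / c by ring]
  have h3 : p ^ 2 + q ^ 2 - 2 * t ≤ (8 * c - 8 * t - 8) / c :=
    (le_div_iff₀ hcp).mpr (by nlinarith [hpoly])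
  have hc0 : c ≠ 0 := ne_of_gt hcp
  have h4 : 8 - 8 * (t + 1) / c = (8 * c - 8 * t - 8) / c := by
    rw [eq_div_iff hc0, sub_mul, div_mul_cancel₀ _ hc0]; ring
  linarith [h3, h4]

lemma aug_inner {n : ℕ} (x y : EuclideanSpace ℝ (Fin n)) :
    (inner ℝ (aug x) (aug y) : ℝ) = inner ℝ x y + 1 := by
  simp only [PiLp.inner_apply, RCLike.inner_apply, conj_trivial, aug]
  rw [Fin.sum_univ_castSucc]
  simp

set_option maxHeartbeats 1000000 in
/-- For `x, x'` in the Euclidean unit ball of `ℝⁿ`,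
`‖x − x'‖₂ ≤ 2 ‖[x,1]/‖[x,1]‖ − [x',1]/‖[x',1]‖‖₂`; in particular, if the
normalized augmented vectors are within `δ/8`, then `‖x − x'‖₂ ≤ δ/4`. -/
theorem stmt14 {n : ℕ} (x x' : EuclideanSpace ℝ (Fin n)) (hx : ‖x‖ ≤ 1) (hx' : ‖x'‖ ≤ 1) :
    ‖x - x'‖ ≤ 2 * ‖(‖aug x‖⁻¹ • aug x) - (‖aug x'‖⁻¹ • aug x')‖ ∧
    ∀ δ : ℝ, ‖(‖aug x‖⁻¹ • aug x) - (‖aug x'‖⁻¹ • aug x')‖ ≤ δ / 8 →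
      ‖x - x'‖ ≤ δ / 4 := by
  have ha2 : ‖aug x‖ ^ 2 = ‖x‖ ^ 2 + 1 := by
    rw [← real_inner_self_eq_norm_sq, aug_inner, real_inner_self_eq_norm_sq]
  have hb2 : ‖aug x'‖ ^ 2 = ‖x'‖ ^ 2 + 1 := by
    rw [← real_inner_self_eq_norm_sq, aug_inner, real_inner_self_eq_norm_sq]
  have hp0 : (0:ℝ) ≤ ‖x‖ := norm_nonneg _
  have hq0 : (0:ℝ) ≤ ‖x'‖ := norm_nonneg _
  have ha0 : 0 ≤ ‖aug x‖ := norm_nonneg _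
  have hb0 : 0 ≤ ‖aug x'‖ := norm_nonneg _
  have ha1 : 1 ≤ ‖aug x‖ := by nlinarith
  have hb1 : 1 ≤ ‖aug x'‖ := by nlinarith
  have hap : 0 < ‖aug x‖ := lt_of_lt_of_le one_pos ha1
  have hbp : 0 < ‖aug x'‖ := lt_of_lt_of_le one_pos hb1
  have hcp : 0 < ‖aug x‖ * ‖aug x'‖ := mul_pos hap hbp
  have hc2 : (‖aug x‖ * ‖aug x'‖) ^ 2 = (‖x‖ * ‖x'‖ + 1) ^ 2 + (‖x‖ - ‖x'‖) ^ 2 := by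
    rw [mul_pow, ha2, hb2]; ring
  have ht : (inner ℝ x x' : ℝ) ≤ ‖x‖ * ‖x'‖ := real_inner_le_norm x x'
  have hd : ‖x - x'‖ ^ 2 = ‖x‖ ^ 2 - 2 * (inner ℝ x x' : ℝ) + ‖x'‖ ^ 2 := norm_sub_sq_real x x'
  have hun : ‖(‖aug x‖⁻¹ • aug x) - (‖aug x'‖⁻¹ • aug x')‖ ^ 2
      = 2 - 2 * (((inner ℝ x x' : ℝ) + 1) / (‖aug x‖ * ‖aug x'‖)) := by
    rw [norm_sub_sq_real, norm_smul, norm_smul, real_inner_smul_left, real_inner_smul_right,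
      aug_inner, Real.norm_eq_abs, Real.norm_eq_abs, abs_of_pos (inv_pos.mpr hap),
      abs_of_pos (inv_pos.mpr hbp)]
    field_simp
    ring
  have hk := key_ineq ‖x‖ ‖x'‖ (inner ℝ x x') (‖aug x‖ * ‖aug x'‖) hp0 hq0 hx hx' ht hc2 hcp
  have key : ‖x - x'‖ ^ 2 ≤ (2 * ‖(‖aug x‖⁻¹ • aug x) - (‖aug x'‖⁻¹ • aug x')‖) ^ 2 := by
    rw [hd, mul_pow, hun]; nlinarith [hk]
  have main : ‖x - x'‖ ≤ 2 * ‖(‖aug x‖⁻¹ • aug x) - (‖aug x'‖⁻¹ • aug x')‖ := by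
    have h0 : 0 ≤ 2 * ‖(‖aug x‖⁻¹ • aug x) - (‖aug x'‖⁻¹ • aug x')‖ := by positivity
    nlinarith [norm_nonneg (x - x'), key]
  refine ⟨main, fun δ hδ => ?_⟩
  linarith
end

section
/- Let u, v ∈ ℝⁿ be orthonormal vectors, let R > 0, and let x♯ = α u with 0 ≤ α < 2R. Set w = 2R(u + v) and ξ = ⟨ (w − x♯)/‖w − x♯‖₂ , v ⟩. Then ξ ∈ (0,1] and α = 2R f(ξ), where f(ξ) = 1 − √(1 − ξ²)/ξ. Equivalently, writing cos θ = ξ for the angle θ between w − x♯ and v, one has ‖x♯‖₂ = 2R − 2R tan θ = 2R f(cos θ). -/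
open scoped RealInnerProductSpace

/-- Let `u, v` be orthonormal, `R > 0`, `x♯ = α u` with `0 ≤ α < 2R`,
`w = 2R(u+v)`, and `ξ = ⟨(w − x♯)/‖w − x♯‖, v⟩`. Then `ξ ∈ (0,1]` and
`α = 2R f(ξ)` with `f(ξ) = 1 − √(1 − ξ²)/ξ`; equivalently, with `cos θ = ξ`,
`‖x♯‖₂ = 2R − 2R tan θ = 2R f(cos θ)`. -/
theorem stmt15 {n : ℕ} (u v : EuclideanSpace ℝ (Fin n)) (hu : ‖u‖ = 1) (hv : ‖v‖ = 1)
    (huv : ⟪u, v⟫ = 0) (R α : ℝ) (hR : 0 < R) (hα0 : 0 ≤ α) (hα2 : α < 2 * R)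
    (xsharp w : EuclideanSpace ℝ (Fin n)) (hxs : xsharp = α • u)
    (hw : w = (2 * R) • (u + v))
    (ξ : ℝ) (hξ : ξ = ⟪(‖w - xsharp‖⁻¹) • (w - xsharp), v⟫) :
    0 < ξ ∧ ξ ≤ 1 ∧ α = 2 * R * (1 - Real.sqrt (1 - ξ ^ 2) / ξ) ∧
      ‖xsharp‖ = 2 * R * (1 - Real.sqrt (1 - ξ ^ 2) / ξ) := by
  set a := 2 * R - α with ha
  set b := 2 * R with hb
  have ha0 : 0 ≤ a := by linarith
  have hb0 : 0 < b := by linarith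
  have hd : w - xsharp = a • u + b • v := by
    rw [hw, hxs, ha, hb]; module
  have hvv : ⟪v, v⟫ = (1 : ℝ) := by
    rw [real_inner_self_eq_norm_sq, hv]; norm_num
  have hinner : ⟪w - xsharp, v⟫ = b := by
    rw [hd, inner_add_left, real_inner_smul_left, real_inner_smul_left, huv, hvv]
    ring
  set N := ‖w - xsharp‖ with hN
  have hN2 : N ^ 2 = a ^ 2 + b ^ 2 := by
    rw [hN, hd, norm_add_sq_real, norm_smul, norm_smul, real_inner_smul_left,
      real_inner_smul_right, huv, hu, hv, Real.norm_eq_abs, Real.norm_eq_abs,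
      abs_of_nonneg ha0, abs_of_pos hb0]
    ring
  have hNpos : 0 < N := by
    have h0 : 0 ≤ N := norm_nonneg _
    nlinarith
  have hξb : ξ = b / N := by
    rw [hξ, real_inner_smul_left, hinner, inv_mul_eq_div]
  have hξpos : 0 < ξ := by rw [hξb]; positivity
  have hbN : b ≤ N := by nlinarith [sq_nonneg (N - b)]
  have hξ1 : ξ ≤ 1 := by rw [hξb, div_le_one hNpos]; exact hbN
  have hsq : Real.sqrt (1 - ξ ^ 2) = a / N := by
    have h1 : 1 - ξ ^ 2 = (a / N) ^ 2 := by
      rw [hξb]; field_simp; nlinarith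
    rw [h1, Real.sqrt_sq (by positivity)]
  have hmain : α = 2 * R * (1 - Real.sqrt (1 - ξ ^ 2) / ξ) := by
    have hN0 : N ≠ 0 := ne_of_gt hNpos
    have hb0' : b ≠ 0 := ne_of_gt hb0
    rw [hsq, hξb, ha, hb]
    field_simp
    ring
  refine ⟨hξpos, hξ1, hmain, ?_⟩
  rw [hxs, norm_smul, hu, Real.norm_eq_abs, abs_of_nonneg hα0, mul_one, hmain]
end
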